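/- Let n be a nonnegative integer and let a, b, c be complex numbers with (a)_n ≠ 0, (1+a−c)_n ≠ 0, (c)_n ≠ 0, and (1+b−c−n)_{2n} ≠ 0. Then _4F_3(−n, a/2, (a+1)/2, b ; a, 1+a−c, c ; 4) = [(c−b)_n / (c)_n] · _4F_3(−n, 1−c−n, b, 1+b−c ; 1+a−c, (1+b−c−n)/2, (2+b−c−n)/2 ; 1/4), both sides being finite sums over k from 0 to n. -/

import Mathlib

open Finset

/-- The rising factorial (Pochhammer symbol) `(a)_k = a(a+1)⋯(a+k-1)`. -/
noncomputable def poch (a : ℂ) (k : ℕ) : ℂ := ∏ i ∈ Finset.range k, (a + i)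

lemma poch_zero (a : ℂ) : poch a 0 = 1 := by simp [poch]

lemma poch_succ (a : ℂ) (k : ℕ) : poch a (k+1) = poch a k * (a + k) := by
  simp [poch, Finset.prod_range_succ]

lemma poch_add (a : ℂ) (j k : ℕ) : poch a (j + k) = poch a j * poch (a + j) k := by
  induction k with
  | zero => simp [poch_zero]
  | succ k ih => rw [← Nat.add_assoc, poch_succ, ih, poch_succ]; push_cast; ring

lemma poch_ne_zero_of_le {a : ℂ} {n : ℕ} (h : poch a n ≠ 0) {k : ℕ} (hk : k ≤ n) :
    poch a k ≠ 0 := by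
  rcases Nat.exists_eq_add_of_le hk with ⟨j, rfl⟩
  rw [poch_add] at h
  exact left_ne_zero_of_mul h

lemma poch_half (a : ℂ) (k : ℕ) :
    poch (a/2) k * poch ((a+1)/2) k * 4^k = poch a (2*k) := by
  induction k with
  | zero => simp [poch_zero]
  | succ k ih =>
    have h2 : 2 * (k+1) = (2*k) + 1 + 1 := by ring
    rw [h2, poch_succ, poch_succ, poch_succ, poch_succ, ← ih]
    push_cast; ring

lemma poch_reflect (x : ℂ) (m : ℕ) : poch x m = (-1)^m * poch (-x - m + 1) m := by
  induction m with
  | zero => simp [poch_zero]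
  | succ m ih =>
    have h1 : poch (-x - (m+1 : ℕ) + 1) (m+1) = (-x - (m+1:ℕ) + 1) * poch (-x - m + 1) m := by
      have := poch_add (-x - (m+1:ℕ) + 1) 1 m
      rw [Nat.add_comm 1 m] at this
      rw [this, poch_succ, poch_zero]
      push_cast; ring_nf
    rw [poch_succ, ih, h1]
    push_cast; ring

lemma vandermonde (k : ℕ) : ∀ x y : ℂ,
    poch (x + y) k
      = ∑ m ∈ range (k+1), (k.choose m : ℂ) * poch (y - m + 1) m * poch (x + m) (k - m) := by
  induction k with
  | zero => intro x y; simp [poch_zero]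
  | succ k ih =>
    intro x y
    rw [Finset.sum_range_succ']
    have hf0 : ((k+1).choose 0 : ℂ) * poch (y - (0:ℕ) + 1) 0 * poch (x + (0:ℕ)) (k+1-0)
        = poch x k * (x + k) := by
      simp [poch_zero, poch_succ]
    rw [hf0]
    have hterm : ∀ m ∈ range (k+1),
        ((k+1).choose (m+1) : ℂ) * poch (y - (m+1:ℕ) + 1) (m+1) * poch (x + (m+1:ℕ)) (k+1-(m+1))
        = (k.choose (m+1) : ℂ) * poch (y - m) (m+1) * poch (x + (m+1:ℕ)) (k-m)
          + (k.choose m : ℂ) * (poch (y - m) m * y) * poch ((x+1) + m) (k-m) := by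
      intro m hm
      rw [Nat.choose_succ_succ']
      have h1 : y - (m+1:ℕ) + 1 = y - m := by push_cast; ring
      have h2 : poch (y - m) (m+1) = poch (y-m) m * y := by
        have := poch_add (y - m) m 1
        rw [this, poch_succ, poch_zero]; ring
      have h3 : (x + (m+1:ℕ)) = (x+1) + m := by push_cast; ring
      have h4 : k+1-(m+1) = k-m := by omega
      rw [h1, h2, h3, h4]
      push_cast; ring
    rw [Finset.sum_congr rfl hterm, Finset.sum_add_distrib]
    have hB : ∑ m ∈ range (k+1), (k.choose m : ℂ) * (poch (y - m) m * y) * poch ((x+1) + m) (k-m)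
        = y * poch (x + y) k := by
      have := ih (x+1) (y-1)
      have harg : (x+1) + (y-1) = x + y := by ring
      rw [harg] at this
      rw [this, Finset.mul_sum]
      refine Finset.sum_congr rfl fun m hm => ?_
      have : y - 1 - m + 1 = y - m := by push_cast; ring
      rw [this]; ring
    rw [hB]
    have hA : ∑ m ∈ range (k+1), (k.choose (m+1) : ℂ) * poch (y - m) (m+1) * poch (x + (m+1:ℕ)) (k-m)
        = (x+k) * (poch (x+y) k - poch x k) := by
      have ihx := ih x y
      -- peel m=0 from ihx
      rw [Finset.sum_range_succ'] at ihx
      have h0 : ((k).choose 0 : ℂ) * poch (y - (0:ℕ) + 1) 0 * poch (x + (0:ℕ)) (k-0) = poch x k := by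
        simp [poch_zero]
      rw [h0] at ihx
      -- now ihx : poch (x+y) k = ∑ m ∈ range k, C(k,m+1)(y-(m+1)+1)_{m+1}(x+(m+1))_{k-(m+1)} + poch x k
      have key : ∑ m ∈ range (k+1), (k.choose (m+1) : ℂ) * poch (y - m) (m+1) * poch (x + (m+1:ℕ)) (k-m)
          = ∑ m ∈ range k, (k.choose (m+1) : ℂ) * poch (y - (m+1:ℕ) + 1) (m+1) * poch (x + (m+1:ℕ)) (k-(m+1)) * (x+k) := by
        rw [Finset.sum_range_succ]
        simp only [Nat.choose_succ_self, Nat.cast_zero, zero_mul, add_zero]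
        refine Finset.sum_congr rfl fun m hm => ?_
        have hm' : m < k := Finset.mem_range.mp hm
        have h1 : y - (m+1:ℕ) + 1 = y - m := by push_cast; ring
        have h2 : k - m = (k - (m+1)) + 1 := by omega
        have h3 : poch (x + (m+1:ℕ)) ((k - (m+1)) + 1)
            = poch (x + (m+1:ℕ)) (k-(m+1)) * (x + k) := by
          rw [poch_succ]
          congr 1
          have : ((k - (m+1) : ℕ) : ℂ) = (k : ℂ) - (m+1 : ℕ) := by
            push_cast [Nat.cast_sub (by omega : m+1 ≤ k)]; ring
          rw [this]; push_cast; ring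
        rw [h1, h2, h3]; ring
      rw [key, ← Finset.sum_mul]
      have : ∑ m ∈ range k, (k.choose (m+1) : ℂ) * poch (y - (m+1:ℕ) + 1) (m+1) * poch (x + (m+1:ℕ)) (k-(m+1))
          = poch (x+y) k - poch x k := by rw [eq_sub_iff_add_eq]; exact ihx.symm
      rw [this]; ring
    rw [hA, poch_succ]
    ring

lemma chu_poly (N : ℕ) (B C : ℂ) :
    poch (C - B) N = ∑ i ∈ range (N+1), (-1:ℂ)^i * (N.choose i : ℂ) * poch B i * poch (C + i) (N - i) := by
  have := vandermonde N C (-B)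
  have h1 : C + -B = C - B := by ring
  rw [h1] at this
  rw [this]
  refine Finset.sum_congr rfl fun i hi => ?_
  have h2 : poch B i = (-1:ℂ)^i * poch (-B - i + 1) i := poch_reflect B i
  rw [h2]
  have h3 : ((-1:ℂ)^i * (-1:ℂ)^i) = 1 := by
    rw [← pow_add]; simp [pow_mul']
  calc (N.choose i : ℂ) * poch (-B - ↑i + 1) i * poch (C + ↑i) (N - i)
      = ((-1:ℂ)^i * (-1:ℂ)^i) * ((N.choose i : ℂ) * poch (-B - ↑i + 1) i * poch (C + ↑i) (N - i)) := by
        rw [h3]; ring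
    _ = (-1:ℂ)^i * (N.choose i : ℂ) * ((-1:ℂ)^i * poch (-B - ↑i + 1) i) * poch (C + ↑i) (N - i) := by ring

lemma poch_neg_nat (N : ℕ) : ∀ i, i ≤ N → poch (-(N:ℂ)) i = (-1:ℂ)^i * (N.choose i : ℂ) * (i.factorial : ℂ) := by
  intro i hi
  induction i with
  | zero => simp [poch_zero]
  | succ i ih =>
    rw [poch_succ, ih (by omega)]
    have hch : (N.choose (i+1) : ℂ) * ((i+1) : ℂ) = (N.choose i : ℂ) * ((N:ℂ) - i) := by
      have h := Nat.choose_succ_right_eq N i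
      have : ((N.choose (i+1) * (i+1) : ℕ) : ℂ) = ((N.choose i * (N - i) : ℕ) : ℂ) := by
        rw [h]
      push_cast [Nat.cast_sub (by omega : i ≤ N)] at this
      push_cast
      linear_combination this
    have hf : ((i+1).factorial : ℂ) = (i.factorial : ℂ) * ((i+1 : ℕ) : ℂ) := by
      rw [Nat.factorial_succ]; push_cast; ring
    rw [hf]
    push_cast
    push_cast at hch
    linear_combination ((-1:ℂ)^i * (i.factorial : ℂ)) * hch

lemma chu (N : ℕ) (B C : ℂ) (hC : poch C N ≠ 0) :
    ∑ i ∈ range (N+1), poch (-(N:ℂ)) i * poch B i / ((Nat.factorial i : ℂ) * poch C i)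
      = poch (C - B) N / poch C N := by
  rw [chu_poly N B C, Finset.sum_div]
  refine Finset.sum_congr rfl fun i hi => ?_
  have hiN : i ≤ N := by have := Finset.mem_range.mp hi; omega
  rw [poch_neg_nat N i hiN]
  have hCi : poch C i ≠ 0 := poch_ne_zero_of_le hC hiN
  have hCN : poch C N = poch C i * poch (C + i) (N - i) := by
    have := poch_add C i (N - i)
    rw [Nat.add_sub_cancel' hiN] at this
    exact this
  have hCr : poch (C + i) (N - i) ≠ 0 := by
    intro h0; rw [hCN, h0, mul_zero] at hC; exact hC rfl
  have hfact : (i.factorial : ℂ) ≠ 0 := by exact_mod_cast i.factorial_ne_zero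
  rw [hCN]
  field_simp

theorem stmt_1 (n : ℕ) (a b c : ℂ)
    (ha : poch a n ≠ 0) (hac : poch (1 + a - c) n ≠ 0) (hc : poch c n ≠ 0)
    (hbc : poch (1 + b - c - (n : ℂ)) (2 * n) ≠ 0) :
    ∑ k ∈ range (n + 1),
      (poch (-(n : ℂ)) k * poch (a / 2) k * poch ((a + 1) / 2) k * poch b k) /
        ((Nat.factorial k : ℂ) * poch a k * poch (1 + a - c) k * poch c k) * (4 : ℂ) ^ k
    = poch (c - b) n / poch c n *
      ∑ k ∈ range (n + 1),
        (poch (-(n : ℂ)) k * poch (1 - c - (n : ℂ)) k * poch b k * poch (1 + b - c) k) /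
          ((Nat.factorial k : ℂ) * poch (1 + a - c) k * poch ((1 + b - c - (n : ℂ)) / 2) k *
            poch ((2 + b - c - (n : ℂ)) / 2) k) * (1 / 4 : ℂ) ^ k := by
  have hstep1 : ∀ k ∈ range (n+1),
      (poch (-(n : ℂ)) k * poch (a / 2) k * poch ((a + 1) / 2) k * poch b k) /
        ((Nat.factorial k : ℂ) * poch a k * poch (1 + a - c) k * poch c k) * (4 : ℂ) ^ k
      = ∑ m ∈ range (n+1),
          (poch (-(n : ℂ)) k * poch b k * (k.choose m : ℂ) * poch (c + k - m) m) /
            ((Nat.factorial k : ℂ) * poch c k) / poch (1 + a - c) m := by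
    intro k hk
    have hkn : k ≤ n := by have := Finset.mem_range.mp hk; omega
    have hak : poch a k ≠ 0 := poch_ne_zero_of_le ha hkn
    have hck : poch c k ≠ 0 := poch_ne_zero_of_le hc hkn
    have hxk : poch (1+a-c) k ≠ 0 := poch_ne_zero_of_le hac hkn
    have hfk : ((Nat.factorial k : ℂ)) ≠ 0 := by exact_mod_cast k.factorial_ne_zero
    have h2k : poch (a/2) k * poch ((a+1)/2) k * 4^k = poch a k * poch (a + k) k := by
      rw [poch_half]
      have h2 : 2*k = k + k := by omega
      rw [h2, poch_add]
    have hv : poch (a + (k:ℂ)) k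
        = ∑ m ∈ range (k+1), (k.choose m : ℂ) * poch (c + k - m) m * poch ((1+a-c) + m) (k - m) := by
      have hv0 := vandermonde k (1+a-c) (c + k - 1)
      have harg : (1+a-c) + (c + (k:ℂ) - 1) = a + k := by ring
      rw [harg] at hv0
      rw [hv0]
      refine Finset.sum_congr rfl fun m hm => ?_
      have h3 : c + (k:ℂ) - 1 - m + 1 = c + k - m := by ring
      rw [h3]
    have e1 : (poch (-(n : ℂ)) k * poch (a / 2) k * poch ((a + 1) / 2) k * poch b k) /
        ((Nat.factorial k : ℂ) * poch a k * poch (1 + a - c) k * poch c k) * (4 : ℂ) ^ k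
        = (poch (-(n:ℂ)) k * poch b k) / ((Nat.factorial k : ℂ) * poch c k) *
            (poch (a + (k:ℂ)) k / poch (1+a-c) k) := by
      rw [div_mul_eq_mul_div, div_mul_div_comm, div_eq_div_iff
        (by exact mul_ne_zero (mul_ne_zero (mul_ne_zero hfk hak) hxk) hck)
        (by exact mul_ne_zero (mul_ne_zero hfk hck) hxk)]
      linear_combination (poch (-(n:ℂ)) k * poch b k * (Nat.factorial k : ℂ) * poch c k *
        poch (1+a-c) k) * h2k
    rw [e1, hv, Finset.sum_div, Finset.mul_sum]
    calc ∑ m ∈ range (k+1), (poch (-(n:ℂ)) k * poch b k) / ((Nat.factorial k : ℂ) * poch c k) *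
            ((k.choose m : ℂ) * poch (c + k - m) m * poch ((1+a-c) + m) (k - m) / poch (1+a-c) k)
        = ∑ m ∈ range (n+1), (poch (-(n:ℂ)) k * poch b k) / ((Nat.factorial k : ℂ) * poch c k) *
            ((k.choose m : ℂ) * poch (c + k - m) m * poch ((1+a-c) + m) (k - m) / poch (1+a-c) k) := by
          refine Finset.sum_subset (Finset.range_subset_range.mpr (by omega)) ?_
          intro m hm hm'
          have hlt : k < m := by simp only [Finset.mem_range] at hm hm'; omega
          rw [Nat.choose_eq_zero_of_lt hlt]
          simp
      _ = _ := by
          refine Finset.sum_congr rfl fun m hm => ?_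
          rcases le_or_gt m k with hmk | hmk
          · have hxm : poch (1+a-c) m ≠ 0 := poch_ne_zero_of_le hac (le_trans hmk hkn)
            have hsplit : poch (1+a-c) k = poch (1+a-c) m * poch ((1+a-c) + m) (k - m) := by
              have h5 := poch_add (1+a-c) m (k-m)
              rw [Nat.add_sub_cancel' hmk] at h5
              exact h5
            have hxr : poch ((1+a-c) + m) (k - m) ≠ 0 := by
              intro h0; rw [hsplit, h0, mul_zero] at hxk; exact hxk rfl
            rw [hsplit]
            field_simp
          · rw [Nat.choose_eq_zero_of_lt hmk]
            simp
  rw [Finset.sum_congr rfl hstep1, Finset.sum_comm, Finset.mul_sum]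
  refine Finset.sum_congr rfl fun m hm => ?_
  have hmn : m ≤ n := by have := Finset.mem_range.mp hm; omega
  have hxm : poch (1+a-c) m ≠ 0 := poch_ne_zero_of_le hac hmn
  have hfm : ((Nat.factorial m : ℂ)) ≠ 0 := by exact_mod_cast m.factorial_ne_zero
  have key : ∑ k ∈ range (n+1),
      (poch (-(n : ℂ)) k * poch b k * (k.choose m : ℂ) * poch (c + k - m) m) /
        ((Nat.factorial k : ℂ) * poch c k)
      = poch (-(n:ℂ)) m * poch b m / (Nat.factorial m : ℂ) *
          (poch (c - b - m) (n-m) / poch c (n-m)) := by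
    rw [Finset.range_eq_Ico, ← Finset.sum_Ico_consecutive _ (Nat.zero_le m) (by omega : m ≤ n+1)]
    have hz : ∑ k ∈ Finset.Ico 0 m,
        (poch (-(n : ℂ)) k * poch b k * (k.choose m : ℂ) * poch (c + k - m) m) /
          ((Nat.factorial k : ℂ) * poch c k) = 0 := by
      refine Finset.sum_eq_zero fun k hk => ?_
      have hlt : k < m := by simp only [Finset.mem_Ico] at hk; omega
      rw [Nat.choose_eq_zero_of_lt hlt]
      simp
    rw [hz, zero_add, Finset.sum_Ico_eq_sum_range]
    have hterm : ∀ i ∈ range (n+1-m),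
        (poch (-(n : ℂ)) (m+i) * poch b (m+i) * ((m+i).choose m : ℂ) * poch (c + ((m+i:ℕ):ℂ) - m) m) /
          ((Nat.factorial (m+i) : ℂ) * poch c (m+i))
        = (poch (-(n:ℂ)) m * poch b m / (Nat.factorial m : ℂ)) *
            (poch (-((n-m : ℕ):ℂ)) i * poch (b + m) i / ((Nat.factorial i : ℂ) * poch c i)) := by
      intro i hi
      have hin : m + i ≤ n := by have := Finset.mem_range.mp hi; omega
      have hcmi : poch c (m+i) ≠ 0 := poch_ne_zero_of_le hc hin
      have hci : poch c i ≠ 0 := poch_ne_zero_of_le hc (by omega)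
      have hfi : ((Nat.factorial i : ℂ)) ≠ 0 := by exact_mod_cast i.factorial_ne_zero
      have hfmi : ((Nat.factorial (m+i) : ℂ)) ≠ 0 := by exact_mod_cast (m+i).factorial_ne_zero
      have s1 : poch (-(n:ℂ)) (m+i) = poch (-(n:ℂ)) m * poch (-((n-m:ℕ):ℂ)) i := by
        rw [poch_add]
        congr 1
        push_cast [Nat.cast_sub hmn]
        ring
      have s2 : poch b (m+i) = poch b m * poch (b + m) i := by rw [poch_add]
      have s3 : poch c (m+i) = poch c i * poch (c + i) m := by
        rw [Nat.add_comm m i, poch_add]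
      have s4 : poch (c + ((m+i:ℕ):ℂ) - m) m = poch (c + i) m := by
        congr 1; push_cast; ring
      have s5 : ((m+i).choose m : ℂ) * (Nat.factorial m : ℂ) * (Nat.factorial i : ℂ)
          = ((Nat.factorial (m+i) : ℕ) : ℂ) := by
        have h6 := Nat.add_choose_mul_factorial_mul_factorial i m
        have h7 : (m+i).choose m * Nat.factorial i * Nat.factorial m = Nat.factorial (m+i) := by
          rw [Nat.add_comm m i]; exact h6
        have h8 : (((m+i).choose m * Nat.factorial i * Nat.factorial m : ℕ) : ℂ)
            = ((Nat.factorial (m+i) : ℕ) : ℂ) := by rw [h7]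
        push_cast at h8 ⊢
        linear_combination h8
      have hcim : poch (c+(i:ℂ)) m ≠ 0 := by
        intro h0; rw [s3, h0, mul_zero] at hcmi; exact hcmi rfl
      rw [s1, s2, s3, s4, div_mul_div_comm, div_eq_div_iff
        (by exact mul_ne_zero hfmi (mul_ne_zero hci hcim))
        (by exact mul_ne_zero hfm (mul_ne_zero hfi hci))]
      linear_combination (poch (-(n:ℂ)) m * poch b m * poch (-((n-m:ℕ):ℂ)) i * poch (b+m) i *
        poch (c+(i:ℂ)) m * poch c i) * s5
    rw [Finset.sum_congr rfl hterm, ← Finset.mul_sum]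
    have hr : n+1-m = (n-m)+1 := by omega
    rw [hr, chu (n-m) (b+m) c (poch_ne_zero_of_le hc (by omega))]
    rw [show c - (b+(m:ℂ)) = c - b - (m:ℂ) from by ring]
  rw [← Finset.sum_div, key]
  -- final per-m identity
  have h4 : poch ((1+b-c-(n:ℂ))/2) m * poch ((2+b-c-(n:ℂ))/2) m * 4^m
      = poch (1+b-c-(n:ℂ)) (2*m) := by
    have h9 := poch_half (1+b-c-(n:ℂ)) m
    rw [show (1+b-c-(n:ℂ)+1)/2 = (2+b-c-(n:ℂ))/2 from by ring] at h9
    exact h9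
  have hbm2 : poch (1+b-c-(n:ℂ)) (2*m) ≠ 0 := poch_ne_zero_of_le hbc (by omega)
  have hhalf1 : poch ((1+b-c-(n:ℂ))/2) m ≠ 0 := by
    intro h0; rw [← h4, h0] at hbm2; simp at hbm2
  have hhalf2 : poch ((2+b-c-(n:ℂ))/2) m ≠ 0 := by
    intro h0; rw [← h4, h0] at hbm2; simp at hbm2
  have hcnm : poch c (n-m) ≠ 0 := poch_ne_zero_of_le hc (by omega)
  have h4m : (4:ℂ)^m ≠ 0 := pow_ne_zero _ (by norm_num)
  have hpow1 : (-1:ℂ)^m * (-1:ℂ)^m = 1 := by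
    rw [← pow_add, ← two_mul, pow_mul]; norm_num
  have claim : poch (1-c-(n:ℂ)) m * poch (1+b-c) m * poch c (n-m) * poch (c-b) n
      = poch (c-b-(m:ℂ)) (n-m) * poch c n * poch (1+b-c-(n:ℂ)) (2*m) := by
    have r1 : poch (1-c-(n:ℂ)) m = (-1:ℂ)^m * poch (c+(n:ℂ)-m) m := by
      rw [poch_reflect (1-c-(n:ℂ)) m,
        show -(1-c-(n:ℂ)) - (m:ℂ) + 1 = c+(n:ℂ)-m from by ring]
    have r2 : poch (1+b-c) m = (-1:ℂ)^m * poch (c-b-(m:ℂ)) m := by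
      rw [poch_reflect (1+b-c) m,
        show -(1+b-c) - (m:ℂ) + 1 = c-b-(m:ℂ) from by ring]
    have r3 : poch (1+b-c-(n:ℂ)) (2*m) = poch (c-b+(n:ℂ)-2*m) (2*m) := by
      rw [poch_reflect (1+b-c-(n:ℂ)) (2*m),
        show -(1+b-c-(n:ℂ)) - ((2*m:ℕ):ℂ) + 1 = c-b+(n:ℂ)-2*m from by push_cast; ring]
      rw [pow_mul]; norm_num
    have s1 : poch c n = poch c (n-m) * poch (c+(n:ℂ)-m) m := by
      have h10 := poch_add c (n-m) m
      rw [show n-m+m = n from by omega] at h10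
      rw [h10, show c + ((n-m:ℕ):ℂ) = c+(n:ℂ)-m from by push_cast [Nat.cast_sub hmn]; ring]
    have s23 : poch (c-b-(m:ℂ)) (n-m) * poch (c-b+(n:ℂ)-2*m) (2*m)
        = poch (c-b-(m:ℂ)) m * poch (c-b) n := by
      have h11 := poch_add (c-b-(m:ℂ)) (n-m) (2*m)
      rw [show n-m+2*m = m+n from by omega] at h11
      have h12 := poch_add (c-b-(m:ℂ)) m n
      rw [show c-b-(m:ℂ)+(m:ℂ) = c-b from by ring] at h12
      rw [show c-b-(m:ℂ) + ((n-m:ℕ):ℂ) = c-b+(n:ℂ)-2*m from by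
        push_cast [Nat.cast_sub hmn]; ring] at h11
      rw [← h11, h12]
    rw [r1, r2, r3, s1]
    linear_combination (poch (c+(n:ℂ)-m) m * poch (c-b-(m:ℂ)) m * poch c (n-m) * poch (c-b) n) *
      hpow1 - (poch (c+(n:ℂ)-m) m * poch c (n-m)) * s23
  rw [div_mul_div_comm, div_div, div_pow, one_pow, div_mul_div_comm, mul_one,
    div_mul_div_comm, div_eq_div_iff
      (by exact mul_ne_zero (mul_ne_zero hfm hcnm) hxm)
      (by exact mul_ne_zero hc (mul_ne_zero (mul_ne_zero (mul_ne_zero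
        (mul_ne_zero hfm hxm) hhalf1) hhalf2) h4m))]
  linear_combination (poch (-(n:ℂ)) m * poch b m * (Nat.factorial m : ℂ) * poch (1+a-c) m *
      poch (c-b-(m:ℂ)) (n-m) * poch c n) * h4 -
    (poch (-(n:ℂ)) m * poch b m * (Nat.factorial m : ℂ) * poch (1+a-c) m) * claim
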